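/- Let 0 < p < q and let P ⊂ ℝ^d be finite. Any 1-spanner of the p-power metric on P is a 1-spanner of the q-power metric on P: if E is a set of pairs of points of P such that the shortest-path distance in the graph (P, E) with edge weights ‖u − v‖^p equals d_p(a,b) for all a, b ∈ P, then the shortest-path distance in the graph (P, E) with edge weights ‖u − v‖^q equals d_q(a,b) for all a, b ∈ P. -/

import Mathlib

open scoped BigOperators

noncomputable section

/-- Points of `ℝ^d`. -/
abbrev Pt (d : ℕ) : Type := EuclideanSpace ℝ (Fin d)

/-- The `p`-power metric on a point set `P ⊆ ℝ^d`: the infimum over finite chains of points of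
`P` from `a` to `b` of the sum of `p`-th powers of the Euclidean lengths of the steps. -/
noncomputable def powerMetric {d : ℕ} (P : Set (Pt d)) (p : ℝ) (a b : Pt d) : ℝ :=
  sInf {c : ℝ | ∃ (k : ℕ) (q : Fin (k + 1) → Pt d), q 0 = a ∧ q (Fin.last k) = b ∧
    (∀ i, q i ∈ P) ∧ c = ∑ i : Fin k, ‖q i.succ - q i.castSucc‖ ^ p}

/-- Shortest-path distance in the graph whose (undirected) edges are the pairs in `E`, with edge
weights `w`. -/
noncomputable def spanDist {d : ℕ} (E : Set (Pt d × Pt d)) (w : Pt d → Pt d → ℝ)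
    (a b : Pt d) : ℝ :=
  sInf {c : ℝ | ∃ (k : ℕ) (q : Fin (k + 1) → Pt d), q 0 = a ∧ q (Fin.last k) = b ∧
    (∀ i : Fin k, (q i.castSucc, q i.succ) ∈ E ∨ (q i.succ, q i.castSucc) ∈ E) ∧
    c = ∑ i : Fin k, w (q i.castSucc) (q i.succ)}

namespace SpannerAux

variable {α : Type*}

/-- Cost of a list chain. -/
def lcost (w : α → α → ℝ) : List α → ℝ
  | a :: b :: t => w a b + lcost w (b :: t)
  | _ => 0

@[simp] lemma lcost_nil (w : α → α → ℝ) : lcost w ([] : List α) = 0 := rfl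
@[simp] lemma lcost_singleton (w : α → α → ℝ) (a : α) : lcost w [a] = 0 := rfl
@[simp] lemma lcost_cons_cons (w : α → α → ℝ) (a b : α) (t : List α) :
    lcost w (a :: b :: t) = w a b + lcost w (b :: t) := rfl

lemma lcost_nonneg {w : α → α → ℝ} (hw : ∀ x y, 0 ≤ w x y) : ∀ l : List α, 0 ≤ lcost w l
  | [] => le_refl 0
  | [_] => le_refl 0
  | a :: b :: t => add_nonneg (hw a b) (lcost_nonneg hw (b :: t))

lemma lcost_append_cons (w : α → α → ℝ) (x : α) (v : List α) :
    ∀ u : List α, lcost w (u ++ x :: v) = lcost w (u ++ [x]) + lcost w (x :: v)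
  | [] => by simp
  | [a] => by simp
  | a :: c :: u'' => by
      have ih := lcost_append_cons w x v (c :: u'')
      simp only [List.cons_append, lcost_cons_cons] at *
      rw [ih]; ring

/-- Costs of chains from `a` to `b` whose consecutive pairs satisfy `Ok`. -/
def chainSet (Ok : α → α → Prop) (w : α → α → ℝ) (a b : α) : Set ℝ :=
  {c | ∃ (k : ℕ) (Q : Fin (k + 1) → α), Q 0 = a ∧ Q (Fin.last k) = b ∧
    (∀ i : Fin k, Ok (Q i.castSucc) (Q i.succ)) ∧
    c = ∑ i : Fin k, w (Q i.castSucc) (Q i.succ)}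

lemma ofFn_head? {k : ℕ} (Q : Fin (k + 1) → α) : (List.ofFn Q).head? = some (Q 0) := by
  rw [List.ofFn_succ]; rfl

lemma ofFn_getLast? : ∀ {k : ℕ} (Q : Fin (k + 1) → α),
    (List.ofFn Q).getLast? = some (Q (Fin.last k))
  | 0, Q => by simp [List.ofFn_succ]
  | (k + 1), Q => by
      rw [List.ofFn_succ]
      rw [List.ofFn_succ (f := fun i : Fin (k+1) => Q i.succ)]
      rw [List.getLast?_cons_cons]
      rw [← List.ofFn_succ (f := fun i : Fin (k+1) => Q i.succ)]
      rw [ofFn_getLast? (fun i : Fin (k+1) => Q i.succ)]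
      rw [Fin.succ_last]

lemma ofFn_chain' (Ok : α → α → Prop) : ∀ {k : ℕ} (Q : Fin (k + 1) → α),
    (List.ofFn Q).Chain' Ok ↔ ∀ i : Fin k, Ok (Q i.castSucc) (Q i.succ)
  | 0, Q => by simp [List.ofFn_succ, List.Chain']
  | (k + 1), Q => by
      rw [List.ofFn_succ]
      rw [List.ofFn_succ (f := fun i : Fin (k+1) => Q i.succ)]
      rw [show ∀ (a b : α) l, List.Chain' Ok (a :: b :: l) ↔ Ok a b ∧ List.Chain' Ok (b :: l) from fun _ _ _ => List.isChain_cons_cons]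
      rw [← List.ofFn_succ (f := fun i : Fin (k+1) => Q i.succ)]
      rw [ofFn_chain' Ok (fun i : Fin (k+1) => Q i.succ)]
      rw [Fin.forall_fin_succ (P := fun i : Fin (k+1) => Ok (Q i.castSucc) (Q i.succ))]
      simp [Fin.succ_castSucc, -Fin.castSucc_succ]

lemma ofFn_lcost (w : α → α → ℝ) : ∀ {k : ℕ} (Q : Fin (k + 1) → α),
    lcost w (List.ofFn Q) = ∑ i : Fin k, w (Q i.castSucc) (Q i.succ)
  | 0, Q => by simp [List.ofFn_succ]
  | (k + 1), Q => by
      rw [List.ofFn_succ]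
      rw [List.ofFn_succ (f := fun i : Fin (k+1) => Q i.succ)]
      rw [lcost_cons_cons]
      rw [← List.ofFn_succ (f := fun i : Fin (k+1) => Q i.succ)]
      rw [ofFn_lcost w (fun i : Fin (k+1) => Q i.succ)]
      rw [Fin.sum_univ_succ (f := fun i : Fin (k+1) => w (Q i.castSucc) (Q i.succ))]
      simp [Fin.succ_castSucc, -Fin.castSucc_succ]

lemma mem_chainSet_iff {Ok : α → α → Prop} {w : α → α → ℝ} {a b : α} {c : ℝ} :
    c ∈ chainSet Ok w a b ↔ ∃ l : List α, l ≠ [] ∧ l.head? = some a ∧ l.getLast? = some b ∧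
      l.Chain' Ok ∧ c = lcost w l := by
  constructor
  · rintro ⟨k, Q, h0, hl, hok, rfl⟩
    refine ⟨List.ofFn Q, by simp [List.ofFn_succ], ?_, ?_, ?_, ?_⟩
    · rw [ofFn_head?, h0]
    · rw [ofFn_getLast?, hl]
    · rw [ofFn_chain']; exact hok
    · rw [ofFn_lcost]
  · rintro ⟨l, hne, hh, hl, hc, rfl⟩
    obtain ⟨h, t, rfl⟩ : ∃ h t, l = h :: t := by
      cases l with
      | nil => exact absurd rfl hne
      | cons h t => exact ⟨h, t, rfl⟩
    have hofn : List.ofFn (h :: t).get = h :: t := List.ofFn_get _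
    refine ⟨t.length, (h :: t).get, ?_, ?_, ?_, ?_⟩
    · have := ofFn_head? (h :: t).get
      rw [hofn] at this
      simpa using (this.symm.trans hh)
    · have := ofFn_getLast? (h :: t).get
      rw [hofn] at this
      simpa using (this.symm.trans hl)
    · rw [← ofFn_chain' Ok (h :: t).get, hofn]; exact hc
    · rw [← ofFn_lcost w (h :: t).get, hofn]

lemma head?_append_cons (u : List α) (x : α) (v : List α) :
    (u ++ x :: v).head? = (u ++ [x]).head? := by
  cases u <;> simp

lemma getLast?_append_cons : ∀ (u : List α) (x : α) (v : List α),
    (u ++ x :: v).getLast? = (x :: v).getLast?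
  | [], x, v => rfl
  | [a], x, v => by rw [List.singleton_append, List.getLast?_cons_cons]
  | a :: c :: u', x, v => by
      rw [List.cons_append, List.cons_append, List.getLast?_cons_cons,
        ← List.cons_append, getLast?_append_cons (c :: u') x v]

lemma chainSet_nonneg {Ok : α → α → Prop} {w : α → α → ℝ} (hw : ∀ x y, 0 ≤ w x y)
    {a b : α} {c : ℝ} (hc : c ∈ chainSet Ok w a b) : 0 ≤ c := by
  obtain ⟨l, _, _, _, _, rfl⟩ := mem_chainSet_iff.mp hc
  exact lcost_nonneg hw l

lemma chainSet_bddBelow {Ok : α → α → Prop} {w : α → α → ℝ} (hw : ∀ x y, 0 ≤ w x y)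
    (a b : α) : BddBelow (chainSet Ok w a b) :=
  ⟨0, fun _ hc => chainSet_nonneg hw hc⟩

lemma refl_mem_chainSet (Ok : α → α → Prop) (w : α → α → ℝ) (a : α) :
    (0 : ℝ) ∈ chainSet Ok w a a := by
  rw [mem_chainSet_iff]
  exact ⟨[a], by simp, rfl, rfl, by simp [List.Chain'], rfl⟩

lemma direct_mem_chainSet {Ok : α → α → Prop} (w : α → α → ℝ) {a b : α} (h : Ok a b) :
    w a b ∈ chainSet Ok w a b := by
  rw [mem_chainSet_iff]
  refine ⟨[a, b], by simp, rfl, rfl, ?_, by simp⟩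
  simp [List.isChain_cons_cons, h, List.Chain']

lemma chainSet_mono {Ok Ok' : α → α → Prop} (h : ∀ x y, Ok x y → Ok' x y)
    (w : α → α → ℝ) (a b : α) : chainSet Ok w a b ⊆ chainSet Ok' w a b := by
  rintro c ⟨k, Q, h0, hl, hok, rfl⟩
  exact ⟨k, Q, h0, hl, fun i => h _ _ (hok i), rfl⟩

lemma chainSet_nonempty_transfer {Ok : α → α → Prop} {w w' : α → α → ℝ} {a b : α}
    (h : (chainSet Ok w a b).Nonempty) : (chainSet Ok w' a b).Nonempty := by
  obtain ⟨c, k, Q, h0, hl, hok, rfl⟩ := h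
  exact ⟨_, k, Q, h0, hl, hok, rfl⟩

/-- Concatenation of chains. -/
lemma add_mem_chainSet {Ok : α → α → Prop} {w : α → α → ℝ} {a x b : α} {c₁ c₂ : ℝ}
    (h₁ : c₁ ∈ chainSet Ok w a x) (h₂ : c₂ ∈ chainSet Ok w x b) :
    c₁ + c₂ ∈ chainSet Ok w a b := by
  obtain ⟨l₁, hne₁, hh₁, hl₁, hc₁, rfl⟩ := mem_chainSet_iff.mp h₁
  obtain ⟨l₂, hne₂, hh₂, hl₂, hc₂, rfl⟩ := mem_chainSet_iff.mp h₂
  obtain ⟨u, rfl⟩ : ∃ u, l₁ = u ++ [x] := List.getLast?_eq_some_iff.mp hl₁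
  obtain ⟨t, rfl⟩ : ∃ t, l₂ = x :: t := by
    cases l₂ with
    | nil => exact absurd rfl hne₂
    | cons h t =>
        have hhx : h = x := by simpa using hh₂
        exact ⟨t, by rw [hhx]⟩
  rw [mem_chainSet_iff]
  refine ⟨u ++ x :: t, by simp, ?_, ?_, ?_, ?_⟩
  · rw [head?_append_cons]; exact hh₁
  · rw [getLast?_append_cons]; exact hl₂
  · have h1 : (u ++ [x]).Chain' Ok := hc₁
    have h2 : (x :: t).Chain' Ok := hc₂
    have : (u ++ [x]) ++ t = u ++ x :: t := by simp
    rw [← this]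
    refine List.isChain_append.mpr ?_
    refine ⟨h1, (List.isChain_cons.mp h2).2, ?_⟩
    intro y hy z hz
    have hyx : x = y := by
      rw [getLast?_append_cons u x []] at hy
      simpa using hy
    subst hyx
    exact (List.isChain_cons.mp h2).1 z hz
  · exact (lcost_append_cons w x t u).symm

/-- Extraction of a duplicate decomposition. -/
lemma exists_dup : ∀ (l : List α), ¬ l.Nodup →
    ∃ (x : α) (l₁ l₂ l₃ : List α), l = l₁ ++ (x :: (l₂ ++ (x :: l₃)))
  | [], h => absurd List.nodup_nil h
  | a :: t, h => by
      by_cases ha : a ∈ t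
      · obtain ⟨s, u, rfl⟩ := List.append_of_mem ha
        exact ⟨a, [], s, u, by simp⟩
      · have ht : ¬ t.Nodup := fun hn => h (List.nodup_cons.mpr ⟨ha, hn⟩)
        obtain ⟨x, l₁, l₂, l₃, rfl⟩ := exists_dup t ht
        exact ⟨x, a :: l₁, l₂, l₃, by simp⟩

/-- Cutting out a duplicate. -/
lemma cut {Ok : α → α → Prop} {w : α → α → ℝ} (hw : ∀ x y, 0 ≤ w x y)
    (x : α) (l₁ l₂ l₃ : List α) (hc : (l₁ ++ (x :: (l₂ ++ (x :: l₃)))).Chain' Ok) :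
    (l₁ ++ (x :: l₃)).Chain' Ok ∧
    (l₁ ++ (x :: l₃)).head? = (l₁ ++ (x :: (l₂ ++ (x :: l₃)))).head? ∧
    (l₁ ++ (x :: l₃)).getLast? = (l₁ ++ (x :: (l₂ ++ (x :: l₃)))).getLast? ∧
    lcost w (l₁ ++ (x :: l₃)) ≤ lcost w (l₁ ++ (x :: (l₂ ++ (x :: l₃)))) := by
  obtain ⟨hcl₁, hcr, hlink⟩ := List.isChain_append.mp hc
  have hsplit : x :: (l₂ ++ (x :: l₃)) = (x :: l₂) ++ (x :: l₃) := by simp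
  have hcr' : ((x :: l₂) ++ (x :: l₃)).Chain' Ok := by rwa [← hsplit]
  have hc3 : (x :: l₃).Chain' Ok := (List.isChain_append.mp hcr').2.1
  refine ⟨?_, ?_, ?_, ?_⟩
  · refine List.isChain_append.mpr ?_
    refine ⟨hcl₁, hc3, ?_⟩
    intro y hy z hz
    refine hlink y hy z ?_
    simpa using hz
  · rw [head?_append_cons l₁ x l₃, head?_append_cons l₁ x (l₂ ++ (x :: l₃))]
  · rw [getLast?_append_cons, hsplit, ← List.append_assoc, getLast?_append_cons]
  · have e1 := lcost_append_cons w x (l₂ ++ (x :: l₃)) l₁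
    have e2 := lcost_append_cons w x l₃ l₁
    have e3 := lcost_append_cons w x l₃ (x :: l₂)
    have h0 : 0 ≤ lcost w ((x :: l₂) ++ [x]) := lcost_nonneg hw _
    rw [e1, e2, hsplit, e3]
    linarith

/-- Any chain can be shortened to a `Nodup` chain with the same endpoints and smaller cost. -/
lemma shorten {Ok : α → α → Prop} {w : α → α → ℝ} (hw : ∀ x y, 0 ≤ w x y) :
    ∀ (n : ℕ) (l : List α), l.length ≤ n → l.Chain' Ok →
    ∃ l' : List α, l'.Nodup ∧ l'.head? = l.head? ∧ l'.getLast? = l.getLast? ∧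
      l'.Chain' Ok ∧ (∀ y ∈ l', y ∈ l) ∧ lcost w l' ≤ lcost w l := by
  intro n
  induction n with
  | zero =>
      intro l hl _
      have : l = [] := List.length_eq_zero_iff.mp (Nat.le_zero.mp hl)
      subst this
      exact ⟨[], List.nodup_nil, rfl, rfl, List.isChain_nil, by simp, le_refl _⟩
  | succ n ih =>
      intro l hl hc
      by_cases hnd : l.Nodup
      · exact ⟨l, hnd, rfl, rfl, hc, fun y hy => hy, le_refl _⟩
      · obtain ⟨x, l₁, l₂, l₃, rfl⟩ := exists_dup l hnd
        obtain ⟨hc', hh', hl', hcost'⟩ := cut hw x l₁ l₂ l₃ hc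
        have hlen : (l₁ ++ (x :: l₃)).length ≤ n := by
          simp only [List.length_append, List.length_cons] at hl ⊢
          omega
        obtain ⟨l', h1, h2, h3, h4, h5, h6⟩ := ih (l₁ ++ (x :: l₃)) hlen hc'
        refine ⟨l', h1, h2.trans hh', h3.trans hl', h4, ?_, h6.trans hcost'⟩
        intro y hy
        have := h5 y hy
        simp only [List.mem_append, List.mem_cons] at this ⊢
        tauto

lemma finite_bounded_lists {F : Set α} (hF : F.Finite) :
    ∀ n : ℕ, {l : List α | l.length ≤ n ∧ ∀ x ∈ l, x ∈ F}.Finite := by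
  intro n
  induction n with
  | zero =>
      apply Set.Finite.subset (Set.finite_singleton ([] : List α))
      rintro l ⟨hl, -⟩
      simp [List.length_eq_zero_iff.mp (Nat.le_zero.mp hl)]
  | succ n ih =>
      apply Set.Finite.subset ((hF.image2 List.cons ih).insert [])
      rintro l ⟨hl, hmem⟩
      cases l with
      | nil => exact Set.mem_insert _ _
      | cons a t =>
          refine Set.mem_insert_of_mem _ ?_
          refine Set.mem_image2_of_mem (hmem a (by simp)) ⟨?_, ?_⟩
          · simpa using hl
          · exact fun x hx => hmem x (by simp [hx])

lemma mem_F_of_chain {Ok : α → α → Prop} {F : Set α} (hOk : ∀ x y, Ok x y → x ∈ F ∧ y ∈ F) :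
    ∀ (l : List α), l.Chain' Ok → (∀ h ∈ l.head?, h ∈ F) → ∀ x ∈ l, x ∈ F
  | [], _, _ => by simp
  | [y], _, hh => by
      intro x hx
      simp only [List.mem_singleton] at hx
      subst hx
      exact hh x rfl
  | y :: z :: t, hc, hh => by
      obtain ⟨hyz, hct⟩ := List.isChain_cons_cons.mp hc
      intro x hx
      rcases List.mem_cons.mp hx with rfl | hx
      · exact hh x rfl
      · exact mem_F_of_chain hOk (z :: t) hct (by simpa using (hOk _ _ hyz).2) x hx

/-- Attainment of the infimum of a chain set. -/
lemma csInf_mem_chainSet {Ok : α → α → Prop} {w : α → α → ℝ} (hw : ∀ x y, 0 ≤ w x y)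
    {F : Set α} (hF : F.Finite) (hOk : ∀ x y, Ok x y → x ∈ F ∧ y ∈ F)
    {a b : α} (ha : a ∈ F) (hne : (chainSet Ok w a b).Nonempty) :
    sInf (chainSet Ok w a b) ∈ chainSet Ok w a b := by
  classical
  set T : Set ℝ := {c | ∃ l : List α, l.Nodup ∧ (∀ x ∈ l, x ∈ F) ∧ l ≠ [] ∧
    l.head? = some a ∧ l.getLast? = some b ∧ l.Chain' Ok ∧ c = lcost w l} with hT
  have hTsub : T ⊆ chainSet Ok w a b := by
    rintro c ⟨l, _, _, hne', hh, hl, hc, rfl⟩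
    exact mem_chainSet_iff.mpr ⟨l, hne', hh, hl, hc, rfl⟩
  have hdom : ∀ c ∈ chainSet Ok w a b, ∃ c' ∈ T, c' ≤ c := by
    intro c hc
    obtain ⟨l, hne', hh, hl, hcl, rfl⟩ := mem_chainSet_iff.mp hc
    obtain ⟨l', h1, h2, h3, h4, h5, h6⟩ := shorten hw l.length l (le_refl _) hcl
    have hmemF : ∀ x ∈ l, x ∈ F := by
      apply mem_F_of_chain hOk l hcl
      intro h hmem
      rw [hh] at hmem
      simp only [Option.mem_def, Option.some.injEq] at hmem
      subst hmem
      exact ha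
    refine ⟨lcost w l', ⟨l', h1, fun x hx => hmemF x (h5 x hx), ?_, h2.trans hh, h3.trans hl,
      h4, rfl⟩, h6⟩
    intro hnil
    rw [hnil] at h2
    rw [hh] at h2
    exact (Option.some_ne_none a) h2.symm
  have hTne : T.Nonempty := by
    obtain ⟨c, hc⟩ := hne
    obtain ⟨c', hc', -⟩ := hdom c hc
    exact ⟨c', hc'⟩
  have hTfin : T.Finite := by
    have : T ⊆ lcost w '' {l : List α | l.length ≤ hF.toFinset.card ∧ ∀ x ∈ l, x ∈ F} := by
      rintro c ⟨l, hnd, hmem, -, -, -, -, rfl⟩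
      refine ⟨l, ⟨?_, hmem⟩, rfl⟩
      have h1 : l.toFinset.card = l.length := List.toFinset_card_of_nodup hnd
      have h2 : l.toFinset ⊆ hF.toFinset := by
        intro x hx
        rw [Set.Finite.mem_toFinset]
        exact hmem x (List.mem_toFinset.mp hx)
      rw [← h1]
      exact Finset.card_le_card h2
    exact Set.Finite.subset ((finite_bounded_lists hF _).image _) this
  have hmmem : sInf T ∈ T := Set.Nonempty.csInf_mem hTne hTfin
  have heq : sInf (chainSet Ok w a b) = sInf T := by
    apply le_antisymm
    · exact csInf_le (chainSet_bddBelow hw a b) (hTsub hmmem)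
    · apply le_csInf hne
      intro c hc
      obtain ⟨c', hc', hle⟩ := hdom c hc
      exact le_trans (csInf_le (hTfin.bddBelow) hc') hle
  rw [heq]
  exact hTsub hmmem

/-! ### Specialization to `Pt d` -/

def OkP {d : ℕ} (P : Set (Pt d)) : Pt d → Pt d → Prop := fun u v => u ∈ P ∧ v ∈ P

def OkE {d : ℕ} (E : Set (Pt d × Pt d)) : Pt d → Pt d → Prop :=
  fun u v => (u, v) ∈ E ∨ (v, u) ∈ E

def wr {d : ℕ} (r : ℝ) : Pt d → Pt d → ℝ := fun u v => ‖u - v‖ ^ r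

lemma wr_nonneg {d : ℕ} (r : ℝ) : ∀ u v : Pt d, 0 ≤ wr r u v :=
  fun _ _ => Real.rpow_nonneg (norm_nonneg _) _

lemma spanDist_eq' {d : ℕ} (E : Set (Pt d × Pt d)) (w : Pt d → Pt d → ℝ) (a b : Pt d) :
    spanDist E w a b = sInf (chainSet (OkE E) w a b) := rfl

lemma chain_const {k : ℕ} {β : Type*} (Q : Fin (k + 1) → β)
    (h : ∀ i : Fin k, Q i.succ = Q i.castSucc) : Q (Fin.last k) = Q 0 := by
  have h' : ∀ i : Fin (k + 1), Q i = Q 0 := by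
    intro i
    induction i using Fin.induction with
    | zero => rfl
    | succ j ih => rw [h j]; exact ih
  exact h' _

lemma powerMetric_eq {d : ℕ} (P : Set (Pt d)) (r : ℝ) (a b : Pt d) (ha : a ∈ P) :
    powerMetric P r a b = sInf (chainSet (OkP P) (wr r) a b) := by
  unfold powerMetric chainSet OkP wr
  congr 1
  ext c
  constructor
  · rintro ⟨k, Q, h0, hl, hmem, rfl⟩
    refine ⟨k, Q, h0, hl, fun i => ⟨hmem _, hmem _⟩, ?_⟩
    apply Finset.sum_congr rfl
    intro i _
    rw [norm_sub_rev]
  · rintro ⟨k, Q, h0, hl, hok, rfl⟩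
    refine ⟨k, Q, h0, hl, ?_, ?_⟩
    · intro i
      induction i using Fin.cases with
      | zero => rw [h0]; exact ha
      | succ j => exact (hok j).2
    · apply Finset.sum_congr rfl
      intro i _
      rw [norm_sub_rev]

lemma dpos {d : ℕ} {P : Set (Pt d)} (hP : P.Finite) {p : ℝ} (hp : 0 < p)
    {a b : Pt d} (ha : a ∈ P) (hb : b ∈ P) (hab : a ≠ b) :
    0 < sInf (chainSet (OkP P) (wr p) a b) := by
  classical
  set s : Finset (Pt d × Pt d) := (hP.toFinset ×ˢ hP.toFinset).filter (fun e => e.1 ≠ e.2)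
    with hs
  have hsne : s.Nonempty := ⟨(a, b), by simp [hs, ha, hb, hab]⟩
  set δ := s.inf' hsne (fun e => ‖e.1 - e.2‖ ^ p) with hδ
  have hδpos : 0 < δ := by
    rw [hδ, Finset.lt_inf'_iff]
    rintro ⟨u, v⟩ hmem
    simp only [hs, Finset.mem_filter, Finset.mem_product, Set.Finite.mem_toFinset] at hmem
    have huv : u - v ≠ 0 := sub_ne_zero.mpr hmem.2
    exact Real.rpow_pos_of_pos (norm_pos_iff.mpr huv) p
  refine lt_of_lt_of_le hδpos ?_
  apply le_csInf ⟨wr p a b, direct_mem_chainSet _ ⟨ha, hb⟩⟩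
  rintro c ⟨k, Q, h0, hl, hok, rfl⟩
  have hstep : ∃ i : Fin k, Q i.castSucc ≠ Q i.succ := by
    by_contra hcon
    push_neg at hcon
    have hQ := chain_const Q (fun i => (hcon i).symm)
    exact hab (by rw [← h0, ← hl, hQ])
  obtain ⟨i, hi⟩ := hstep
  have hterm : δ ≤ wr p (Q i.castSucc) (Q i.succ) := by
    rw [hδ]
    have hmem : (Q i.castSucc, Q i.succ) ∈ s := by
      simp only [hs, Finset.mem_filter, Finset.mem_product, Set.Finite.mem_toFinset]
      exact ⟨⟨(hok i).1, (hok i).2⟩, hi⟩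
    exact Finset.inf'_le _ hmem
  refine le_trans hterm ?_
  exact Finset.single_le_sum (f := fun j : Fin k => wr p (Q j.castSucc) (Q j.succ))
    (fun j _ => wr_nonneg p _ _) (Finset.mem_univ i)

/-! ### Power comparison lemmas -/

lemma chain_le_of_lcost_le {d : ℕ} {p : ℝ} (hp : 0 < p) {S : ℝ} (hS : 0 ≤ S) :
    ∀ l : List (Pt d), lcost (wr p) l ≤ S ^ p → l.Chain' (fun x y => ‖x - y‖ ≤ S)
  | [], _ => List.isChain_nil
  | [_], _ => List.isChain_singleton _
  | x :: y :: t, h => by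
      rw [lcost_cons_cons] at h
      have hwxy : wr p x y = ‖x - y‖ ^ p := rfl
      have h0 : 0 ≤ lcost (wr p) (y :: t) := lcost_nonneg (wr_nonneg p) _
      have hw0 : 0 ≤ wr p x y := wr_nonneg p x y
      have hxy : ‖x - y‖ ≤ S := by
        by_contra hlt
        push_neg at hlt
        have hc := Real.rpow_lt_rpow hS hlt hp
        rw [hwxy] at h
        linarith
      refine List.isChain_cons_cons.mpr ⟨hxy, chain_le_of_lcost_le hp hS (y :: t) ?_⟩
      linarith

lemma rpow_step {p q : ℝ} (hp : 0 < p) (hpq : p < q) {t S : ℝ} (ht : 0 ≤ t) (hts : t ≤ S) :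
    t ^ q ≤ S ^ (q - p) * t ^ p := by
  rcases ht.eq_or_lt with rfl | htpos
  · rw [Real.zero_rpow (by linarith : q ≠ 0), Real.zero_rpow hp.ne']
    simp
  · have h1 : t ^ q = t ^ (q - p) * t ^ p := by
      rw [← Real.rpow_add htpos, sub_add_cancel]
    rw [h1]
    exact mul_le_mul_of_nonneg_right
      (Real.rpow_le_rpow ht hts (by linarith)) (Real.rpow_nonneg ht p)

lemma lcost_q_le_mul {d : ℕ} {p q : ℝ} (hp : 0 < p) (hpq : p < q) {S : ℝ} (hS : 0 ≤ S) :
    ∀ l : List (Pt d), l.Chain' (fun x y => ‖x - y‖ ≤ S) →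
      lcost (wr q) l ≤ S ^ (q - p) * lcost (wr p) l
  | [], _ => by simp
  | [_], _ => by simp
  | x :: y :: t, h => by
      obtain ⟨hxy, hct⟩ := List.isChain_cons_cons.mp h
      have ih := lcost_q_le_mul hp hpq hS (y :: t) hct
      have hstep := rpow_step hp hpq (norm_nonneg (x - y)) hxy
      have e : wr q x y = ‖x - y‖ ^ q := rfl
      have e' : wr p x y = ‖x - y‖ ^ p := rfl
      rw [lcost_cons_cons, lcost_cons_cons, e, e', mul_add]
      linarith

lemma lcost_q_le {d : ℕ} {p q : ℝ} (hp : 0 < p) (hpq : p < q) {S : ℝ} (hS : 0 ≤ S)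
    {l : List (Pt d)} (h : lcost (wr p) l ≤ S ^ p) : lcost (wr q) l ≤ S ^ q := by
  have hc := chain_le_of_lcost_le hp hS l h
  have hb := lcost_q_le_mul hp hpq hS l hc
  rcases hS.eq_or_lt with rfl | hSpos
  · rw [Real.zero_rpow (sub_ne_zero.mpr hpq.ne')] at hb
    rw [Real.zero_rpow (by linarith : q ≠ 0)]
    simpa using hb
  · have h2 : S ^ (q - p) * lcost (wr p) l ≤ S ^ (q - p) * S ^ p :=
      mul_le_mul_of_nonneg_left h (Real.rpow_nonneg hSpos.le _)
    have e : S ^ (q - p) * S ^ p = S ^ q := by rw [← Real.rpow_add hSpos, sub_add_cancel]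
    linarith

lemma lcost_q_lt {d : ℕ} {p q : ℝ} (hp : 0 < p) (hpq : p < q) {S : ℝ} (hS : 0 ≤ S)
    {l : List (Pt d)} (h : lcost (wr p) l < S ^ p) : lcost (wr q) l < S ^ q := by
  have hSpos : 0 < S := by
    rcases hS.eq_or_lt with rfl | h' 
    · exfalso
      rw [Real.zero_rpow hp.ne'] at h
      exact absurd h (not_lt.mpr (lcost_nonneg (wr_nonneg p) l))
    · exact h'
  have hc := chain_le_of_lcost_le hp hS l h.le
  have hb := lcost_q_le_mul hp hpq hS l hc
  have h2 : S ^ (q - p) * lcost (wr p) l < S ^ (q - p) * S ^ p :=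
    mul_lt_mul_of_pos_left h (Real.rpow_pos_of_pos hSpos _)
  have e : S ^ (q - p) * S ^ p = S ^ q := by rw [← Real.rpow_add hSpos, sub_add_cancel]
  linarith

end SpannerAux

open SpannerAux in
/-- For `0 < p < q` and a finite `P ⊆ ℝ^d`: any 1-spanner of the `p`-power
metric on `P` is a 1-spanner of the `q`-power metric on `P`. -/
theorem one_spanner_power_monotone (d : ℕ) (P : Set (Pt d)) (hP : P.Finite)
    (p q : ℝ) (hp : 0 < p) (hpq : p < q)
    (E : Set (Pt d × Pt d)) (hE : ∀ e ∈ E, e.1 ∈ P ∧ e.2 ∈ P)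
    (hspan : ∀ a ∈ P, ∀ b ∈ P,
      spanDist E (fun u v => ‖u - v‖ ^ p) a b = powerMetric P p a b) :
    ∀ a ∈ P, ∀ b ∈ P,
      spanDist E (fun u v => ‖u - v‖ ^ q) a b = powerMetric P q a b := by
  classical
  intro a ha b hb
  have hOkE_F : ∀ u v : Pt d, OkE E u v → u ∈ P ∧ v ∈ P := by
    rintro u v (h | h)
    · exact hE _ h
    · exact ⟨(hE _ h).2, (hE _ h).1⟩
  have hOkP_F : ∀ u v : Pt d, OkP P u v → u ∈ P ∧ v ∈ P := fun _ _ h => h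
  have hsub : ∀ (w : Pt d → Pt d → ℝ) (u v : Pt d),
      chainSet (OkE E) w u v ⊆ chainSet (OkP P) w u v :=
    fun w u v => chainSet_mono (fun x y h => hOkE_F x y h) w u v
  have hDne : ∀ (r : ℝ), ∀ u ∈ P, ∀ v ∈ P, (chainSet (OkP P) (wr r) u v).Nonempty :=
    fun r u hu v hv => ⟨wr r u v, direct_mem_chainSet _ ⟨hu, hv⟩⟩
  -- existence of spanner chains
  have hGne : ∀ u ∈ P, ∀ v ∈ P, ∀ r : ℝ, (chainSet (OkE E) (wr r) u v).Nonempty := by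
    intro u hu v hv
    suffices h : (chainSet (OkE E) (wr p) u v).Nonempty by
      intro r; exact chainSet_nonempty_transfer h
    by_contra hemp
    rw [Set.not_nonempty_iff_eq_empty] at hemp
    have h0 : spanDist E (wr p) u v = 0 := by
      rw [spanDist_eq' E (wr p) u v, hemp]
      exact Real.sInf_empty
    have h1 : sInf (chainSet (OkP P) (wr p) u v) = 0 := by
      have h := hspan u hu v hv
      rw [powerMetric_eq P p u v hu] at h
      rw [← h]
      exact h0
    by_cases huv : u = v
    · subst huv
      have h2 : (0 : ℝ) ∈ chainSet (OkE E) (wr p) u u := refl_mem_chainSet _ _ _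
      rw [hemp] at h2
      exact h2
    · have h3 := dpos hP hp hu hv huv
      rw [h1] at h3
      exact lt_irrefl 0 h3
  -- main induction: optimal `q`-chains are matched by spanner chains
  have M : ∀ l : List (Pt d), ∀ u, u ∈ P → ∀ v, v ∈ P →
      l.head? = some u → l.getLast? = some v → l.Chain' (OkP P) →
      lcost (wr q) l = sInf (chainSet (OkP P) (wr q) u v) →
      sInf (chainSet (OkE E) (wr q) u v) ≤ lcost (wr q) l := by
    intro l
    induction l with
    | nil => intro u hu v hv hh; simp at hh
    | cons y t ih =>
      intro u hu v hv hh hl hc hopt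
      have hyu : y = u := by simpa using hh
      subst hyu
      cases t with
      | nil =>
          have hvy : y = v := by simpa using hl
          subst hvy
          rw [lcost_singleton]
          exact csInf_le (chainSet_bddBelow (wr_nonneg q) _ _) (refl_mem_chainSet _ _ _)
      | cons x t' =>
          obtain ⟨hOkyx, hct⟩ := List.isChain_cons_cons.mp hc
          have hx : x ∈ P := hOkyx.2
          have hlt : (x :: t').getLast? = some v := by
            rw [← List.getLast?_cons_cons (a := y)]; exact hl
          have d1 : sInf (chainSet (OkP P) (wr q) y x) ≤ wr q y x :=
            csInf_le (chainSet_bddBelow (wr_nonneg q) _ _) (direct_mem_chainSet _ hOkyx)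
          have hmem2 : lcost (wr q) (x :: t') ∈ chainSet (OkP P) (wr q) x v :=
            mem_chainSet_iff.mpr ⟨x :: t', by simp, rfl, hlt, hct, rfl⟩
          have d2 : sInf (chainSet (OkP P) (wr q) x v) ≤ lcost (wr q) (x :: t') :=
            csInf_le (chainSet_bddBelow (wr_nonneg q) _ _) hmem2
          have A1 : sInf (chainSet (OkP P) (wr q) y x) ∈ chainSet (OkP P) (wr q) y x :=
            csInf_mem_chainSet (wr_nonneg q) hP hOkP_F hu (hDne q y hu x hx)
          have A2 : sInf (chainSet (OkP P) (wr q) x v) ∈ chainSet (OkP P) (wr q) x v :=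
            csInf_mem_chainSet (wr_nonneg q) hP hOkP_F hx (hDne q x hx v hv)
          have dtri : sInf (chainSet (OkP P) (wr q) y v) ≤
              sInf (chainSet (OkP P) (wr q) y x) + sInf (chainSet (OkP P) (wr q) x v) :=
            csInf_le (chainSet_bddBelow (wr_nonneg q) _ _) (add_mem_chainSet A1 A2)
          rw [lcost_cons_cons] at hopt
          have e1 : sInf (chainSet (OkP P) (wr q) y x) = wr q y x := by linarith
          have e2 : sInf (chainSet (OkP P) (wr q) x v) = lcost (wr q) (x :: t') := by linarith
          have hIH : sInf (chainSet (OkE E) (wr q) x v) ≤ lcost (wr q) (x :: t') :=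
            ih x hx v hv rfl hlt hct e2.symm
          -- the single edge is matched by a spanner chain
          have hedge : sInf (chainSet (OkE E) (wr q) y x) ≤ wr q y x := by
            have hwrq : wr q y x = ‖y - x‖ ^ q := rfl
            have hwrp : wr p y x = ‖y - x‖ ^ p := rfl
            have hDple : sInf (chainSet (OkP P) (wr p) y x) ≤ ‖y - x‖ ^ p := by
              rw [← hwrp]
              exact csInf_le (chainSet_bddBelow (wr_nonneg p) _ _) (direct_mem_chainSet _ hOkyx)
            have hDpge : ‖y - x‖ ^ p ≤ sInf (chainSet (OkP P) (wr p) y x) := by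
              by_contra hlt2
              push_neg at hlt2
              obtain ⟨m, hmne, hmh, hml, hmc, hmeq⟩ := mem_chainSet_iff.mp
                (csInf_mem_chainSet (wr_nonneg p) hP hOkP_F hu (hDne p y hu x hx))
              have hmp : lcost (wr p) m < ‖y - x‖ ^ p := by rw [← hmeq]; exact hlt2
              have hmq : lcost (wr q) m < ‖y - x‖ ^ q :=
                lcost_q_lt hp hpq (norm_nonneg _) hmp
              have h5 : sInf (chainSet (OkP P) (wr q) y x) ≤ lcost (wr q) m :=
                csInf_le (chainSet_bddBelow (wr_nonneg q) _ _)
                  (mem_chainSet_iff.mpr ⟨m, hmne, hmh, hml, hmc, rfl⟩)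
              rw [e1, hwrq] at h5
              linarith
            have hDp : sInf (chainSet (OkP P) (wr p) y x) = ‖y - x‖ ^ p :=
              le_antisymm hDple hDpge
            have hGp : sInf (chainSet (OkE E) (wr p) y x) = ‖y - x‖ ^ p := by
              have h := hspan y hu x hx
              rw [powerMetric_eq P p y x hu] at h
              have h' : sInf (chainSet (OkE E) (wr p) y x)
                  = sInf (chainSet (OkP P) (wr p) y x) := h
              rw [h', hDp]
            obtain ⟨m, hmne, hmh, hml, hmc, hmeq⟩ := mem_chainSet_iff.mp
              (csInf_mem_chainSet (wr_nonneg p) hP hOkE_F hu (hGne y hu x hx p))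
            have hmp : lcost (wr p) m ≤ ‖y - x‖ ^ p := by rw [← hmeq, hGp]
            have hmq : lcost (wr q) m ≤ ‖y - x‖ ^ q :=
              lcost_q_le hp hpq (norm_nonneg _) hmp
            have hmem : lcost (wr q) m ∈ chainSet (OkE E) (wr q) y x :=
              mem_chainSet_iff.mpr ⟨m, hmne, hmh, hml, hmc, rfl⟩
            rw [hwrq]
            exact le_trans (csInf_le (chainSet_bddBelow (wr_nonneg q) _ _) hmem) hmq
          have B1 : sInf (chainSet (OkE E) (wr q) y x) ∈ chainSet (OkE E) (wr q) y x :=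
            csInf_mem_chainSet (wr_nonneg q) hP hOkE_F hu (hGne y hu x hx q)
          have B2 : sInf (chainSet (OkE E) (wr q) x v) ∈ chainSet (OkE E) (wr q) x v :=
            csInf_mem_chainSet (wr_nonneg q) hP hOkE_F hx (hGne x hx v hv q)
          have gtri : sInf (chainSet (OkE E) (wr q) y v) ≤
              sInf (chainSet (OkE E) (wr q) y x) + sInf (chainSet (OkE E) (wr q) x v) :=
            csInf_le (chainSet_bddBelow (wr_nonneg q) _ _) (add_mem_chainSet B1 B2)
          rw [lcost_cons_cons]
          linarith
  -- conclusion
  have h1 : sInf (chainSet (OkP P) (wr q) a b) ≤ sInf (chainSet (OkE E) (wr q) a b) :=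
    csInf_le_csInf (chainSet_bddBelow (wr_nonneg q) _ _) (hGne a ha b hb q) (hsub (wr q) a b)
  obtain ⟨l, hlne, hlh, hll, hlc, hleq⟩ := mem_chainSet_iff.mp
    (csInf_mem_chainSet (wr_nonneg q) hP hOkP_F ha (hDne q a ha b hb))
  have h2 : sInf (chainSet (OkE E) (wr q) a b) ≤ sInf (chainSet (OkP P) (wr q) a b) := by
    have hM := M l a ha b hb hlh hll hlc hleq.symm
    rw [hleq]
    exact hM
  show spanDist E (wr q) a b = powerMetric P q a b
  rw [spanDist_eq' E (wr q) a b, powerMetric_eq P q a b ha]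
  exact le_antisymm h2 h1
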